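/- Let G and H be subgroups of an abelian group, commensurable in the sense that G ∩ H has finite index in both. Define the generalized index [G : H] = #(G/(G∩H)) / #(H/(G∩H)) ∈ ℚ. Then for commensurable subgroups G, H, K one has [G : K] = [G : H] · [H : K]. -/

import Mathlib

/-- The generalized index `[G : H] = #(G/(G∩H)) / #(H/(G∩H)) ∈ ℚ` of commensurable
subgroups. -/
noncomputable def genIndex {A : Type*} [CommGroup A] (G H : Subgroup A) : ℚ :=
  (Subgroup.relIndex H G : ℚ) / (Subgroup.relIndex G H : ℚ)

open Subgroup in
lemma genIndex_eq_aux {A : Type*} [CommGroup A] (G K L : Subgroup A) (hL : L ≤ G ⊓ K)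
    (hLG : L.relIndex G ≠ 0) :
    genIndex G K = (L.relIndex G : ℚ) / (L.relIndex K : ℚ) := by
  have h1 : L.relIndex (G ⊓ K) * (G ⊓ K).relIndex G = L.relIndex G :=
    relIndex_mul_relIndex L (G ⊓ K) G hL inf_le_left
  have h2 : L.relIndex (G ⊓ K) * (G ⊓ K).relIndex K = L.relIndex K :=
    relIndex_mul_relIndex L (G ⊓ K) K hL inf_le_right
  have e1 : (G ⊓ K).relIndex G = K.relIndex G := by rw [inf_comm, inf_relIndex_right]
  have e2 : (G ⊓ K).relIndex K = G.relIndex K := inf_relIndex_right G K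
  have hc : L.relIndex (G ⊓ K) ≠ 0 := by
    intro h; rw [h, zero_mul] at h1; exact hLG h1.symm
  rw [genIndex, ← h1, ← h2, e1, e2]
  push_cast
  rw [mul_div_mul_left]
  exact_mod_cast hc

open Subgroup in
/-- For pairwise commensurable subgroups `G, H, K` of an abelian group, the generalized
index is multiplicative: `[G : K] = [G : H] · [H : K]`. -/
theorem genIndex_mul {A : Type*} [CommGroup A] (G H K : Subgroup A)
    (hGH : Commensurable G H) (hHK : Commensurable H K) (hGK : Commensurable G K) :
    genIndex G K = genIndex G H * genIndex H K := by
  set L := G ⊓ H ⊓ K with hLdef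
  have hG1 : G.relIndex G ≠ 0 := by rw [relIndex_self]; exact one_ne_zero
  have hH1 : H.relIndex H ≠ 0 := by rw [relIndex_self]; exact one_ne_zero
  have hK1 : K.relIndex K ≠ 0 := by rw [relIndex_self]; exact one_ne_zero
  have hLG : L.relIndex G ≠ 0 :=
    relIndex_inf_ne_zero (relIndex_inf_ne_zero hG1 hGH.2) hGK.2
  have hLH : L.relIndex H ≠ 0 :=
    relIndex_inf_ne_zero (relIndex_inf_ne_zero hGH.1 hH1) hHK.2
  have hLK : L.relIndex K ≠ 0 :=
    relIndex_inf_ne_zero (relIndex_inf_ne_zero hGK.1 hHK.1) hK1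
  have eGK := genIndex_eq_aux G K L (le_inf (inf_le_left.trans inf_le_left) inf_le_right) hLG
  have eGH := genIndex_eq_aux G H L (le_inf (inf_le_left.trans inf_le_left)
    (inf_le_left.trans inf_le_right)) hLG
  have eHK := genIndex_eq_aux H K L (le_inf (inf_le_left.trans inf_le_right) inf_le_right) hLH
  rw [eGK, eGH, eHK]
  have hLH' : (L.relIndex H : ℚ) ≠ 0 := by exact_mod_cast hLH
  have hLK' : (L.relIndex K : ℚ) ≠ 0 := by exact_mod_cast hLK
  field_simp
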